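/- Let ε > 0, μ ∈ ℝ, σ > 0, T > 0, and τ > 0. For the symmetric truncated Gaussian density f_T(z; μ, τσ) supported on [μ − T, μ + T], and shifted means h and h' = h + τ with T > τ, for every α > 1 the Rényi divergence of order α between the truncated Gaussian at h (conditioned on the overlap event [h' − T, h + T]) and the truncated Gaussian at h' (conditioned on the same interval) satisfies D_α ≤ α/(2σ²). Specifically, exp((α−1)·D_α) = exp(α(α−1)/(2σ²)) · (Φ((T − (1−α)τ)/(τσ)) − Φ((ατ − T)/(τσ))) / (Φ(T/(τσ)) − Φ((τ−T)/(τσ))) ≤ exp(α(α−1)/(2σ²)). -/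

import Mathlib

open Real MeasureTheory

/-- Standard normal CDF. -/
noncomputable def stdPhi (x : ℝ) : ℝ :=
  ∫ u in Set.Iic x, exp (-u ^ 2 / 2) / Real.sqrt (2 * π)

lemma integrable_gauss : Integrable (fun u : ℝ => exp (-u ^ 2 / 2)) := by
  have h := integrable_exp_neg_mul_sq (show (0:ℝ) < 1/2 by norm_num)
  have : (fun u : ℝ => exp (-u ^ 2 / 2)) = fun u : ℝ => exp (-(1/2) * u ^ 2) := by
    ext u; ring_nf
  rw [this]; exact h

lemma integrable_phi : Integrable (fun u : ℝ => exp (-u ^ 2 / 2) / Real.sqrt (2 * π)) :=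
  integrable_gauss.div_const _

lemma stdPhi_sub (x y : ℝ) :
    stdPhi y - stdPhi x = ∫ u in x..y, exp (-u ^ 2 / 2) / Real.sqrt (2 * π) :=
  intervalIntegral.integral_Iic_sub_Iic integrable_phi.integrableOn integrable_phi.integrableOn

lemma cont_phi : Continuous (fun u : ℝ => exp (-u ^ 2 / 2) / Real.sqrt (2 * π)) := by
  fun_prop

lemma stdPhi_pos_sub {A B : ℝ} (h : A < B) : 0 < stdPhi B - stdPhi A := by
  rw [stdPhi_sub]
  exact intervalIntegral.intervalIntegral_pos_of_pos (cont_phi.intervalIntegrable _ _)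
    (fun x => by positivity) h

lemma key_ineq {A B d : ℝ} (hAB : A ≤ B) (hd : 0 ≤ d) (hsum : 0 ≤ A + B) :
    stdPhi (B + d) - stdPhi (A + d) ≤ stdPhi B - stdPhi A := by
  set φ : ℝ → ℝ := fun u => exp (-u ^ 2 / 2) / Real.sqrt (2 * π) with hφ
  have h1 : stdPhi (B + d) - stdPhi B = ∫ u in B..(B + d), φ u := stdPhi_sub B (B + d)
  have h2 : stdPhi (A + d) - stdPhi A = ∫ u in A..(A + d), φ u := stdPhi_sub A (A + d)
  have hsub : (∫ x in B..(B + d), φ (x - (B - A))) = ∫ u in A..(A + d), φ u := by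
    rw [intervalIntegral.integral_comp_sub_right φ (B - A)]
    congr 1 <;> ring
  have hmono : (∫ u in B..(B + d), φ u) ≤ ∫ x in B..(B + d), φ (x - (B - A)) := by
    apply intervalIntegral.integral_mono_on (by linarith)
      (cont_phi.intervalIntegrable _ _)
      ((cont_phi.comp (by continuity)).intervalIntegrable _ _)
    intro x hx
    have hx1 : B ≤ x := hx.1
    show exp (-x ^ 2 / 2) / Real.sqrt (2 * π) ≤ exp (-(x - (B - A)) ^ 2 / 2) / Real.sqrt (2 * π)
    gcongr exp ?_ / _
    nlinarith
  linarith [hsub ▸ hmono, h1, h2]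

theorem stmt_11 (σ τ T h α : ℝ) (hσ : 0 < σ) (hτ : 0 < τ) (hT : τ < T)
    (hα : 1 < α) :
    let c : ℝ := (1 / Real.sqrt (2 * π * τ ^ 2 * σ ^ 2)) *
      (1 / (stdPhi (T / (τ * σ)) - stdPhi ((τ - T) / (τ * σ))))
    let I : ℝ := c * ∫ z in (h + τ - T)..(h + T),
      exp (-(α * ((z - h) ^ 2 / (2 * τ ^ 2 * σ ^ 2)))
        - (1 - α) * ((z - (h + τ)) ^ 2 / (2 * τ ^ 2 * σ ^ 2)))
    I = exp (α * (α - 1) / (2 * σ ^ 2)) *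
        (stdPhi ((T - (1 - α) * τ) / (τ * σ)) - stdPhi ((α * τ - T) / (τ * σ))) /
        (stdPhi (T / (τ * σ)) - stdPhi ((τ - T) / (τ * σ))) ∧
    I ≤ exp (α * (α - 1) / (2 * σ ^ 2)) ∧
    (1 / (α - 1)) * Real.log I ≤ α / (2 * σ ^ 2) := by
  intro c I
  have hs : 0 < τ * σ := mul_pos hτ hσ
  have hπ : 0 < Real.sqrt (2 * π) := Real.sqrt_pos.mpr (by positivity)
  have hc : c = (1 / Real.sqrt (2 * π * τ ^ 2 * σ ^ 2)) *
      (1 / (stdPhi (T / (τ * σ)) - stdPhi ((τ - T) / (τ * σ)))) := rfl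
  have hI : I = c * ∫ z in (h + τ - T)..(h + T),
      exp (-(α * ((z - h) ^ 2 / (2 * τ ^ 2 * σ ^ 2)))
        - (1 - α) * ((z - (h + τ)) ^ 2 / (2 * τ ^ 2 * σ ^ 2))) := rfl
  have hAB : (τ - T) / (τ * σ) < T / (τ * σ) :=
    (div_lt_div_iff_of_pos_right hs).mpr (by linarith)
  have hb'eq : (T - (1 - α) * τ) / (τ * σ) = T / (τ * σ) + (α - 1) / σ := by
    field_simp; ring
  have ha'eq : (α * τ - T) / (τ * σ) = (τ - T) / (τ * σ) + (α - 1) / σ := by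
    field_simp; ring
  have hab' : (α * τ - T) / (τ * σ) < (T - (1 - α) * τ) / (τ * σ) := by
    rw [ha'eq, hb'eq]; linarith
  have hD : 0 < stdPhi (T / (τ * σ)) - stdPhi ((τ - T) / (τ * σ)) := stdPhi_pos_sub hAB
  have hN : 0 < stdPhi ((T - (1 - α) * τ) / (τ * σ)) - stdPhi ((α * τ - T) / (τ * σ)) :=
    stdPhi_pos_sub hab'
  have hsqrt : Real.sqrt (2 * π * τ ^ 2 * σ ^ 2) = Real.sqrt (2 * π) * (τ * σ) := by
    rw [show 2 * π * τ ^ 2 * σ ^ 2 = (2 * π) * (τ * σ) ^ 2 by ring,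
      Real.sqrt_mul (by positivity), Real.sqrt_sq hs.le]
  have hexp : ∀ z : ℝ, exp (-(α * ((z - h) ^ 2 / (2 * τ ^ 2 * σ ^ 2)))
        - (1 - α) * ((z - (h + τ)) ^ 2 / (2 * τ ^ 2 * σ ^ 2)))
      = exp (α * (α - 1) / (2 * σ ^ 2)) *
        exp (-((z - (h + (1 - α) * τ)) / (τ * σ)) ^ 2 / 2) := by
    intro z
    rw [← Real.exp_add]
    congr 1
    field_simp
    ring
  have hchg : (∫ z in (h + τ - T)..(h + T),
        exp (-((z - (h + (1 - α) * τ)) / (τ * σ)) ^ 2 / 2))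
      = (τ * σ) * (Real.sqrt (2 * π) *
        (stdPhi ((T - (1 - α) * τ) / (τ * σ)) - stdPhi ((α * τ - T) / (τ * σ)))) := by
    have h1 : (∫ z in (h + τ - T)..(h + T),
          exp (-((z - (h + (1 - α) * τ)) / (τ * σ)) ^ 2 / 2))
        = ∫ z in (h + τ - T - (h + (1 - α) * τ))..(h + T - (h + (1 - α) * τ)),
            exp (-(z / (τ * σ)) ^ 2 / 2) :=
      intervalIntegral.integral_comp_sub_right
        (fun z => exp (-(z / (τ * σ)) ^ 2 / 2)) (h + (1 - α) * τ)
    have h2 : (∫ z in (h + τ - T - (h + (1 - α) * τ))..(h + T - (h + (1 - α) * τ)),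
          exp (-(z / (τ * σ)) ^ 2 / 2))
        = (τ * σ) • ∫ u in ((h + τ - T - (h + (1 - α) * τ)) / (τ * σ))..
            ((h + T - (h + (1 - α) * τ)) / (τ * σ)), exp (-u ^ 2 / 2) :=
      intervalIntegral.integral_comp_div (f := fun u => exp (-u ^ 2 / 2)) (by positivity)
    have e1 : (h + τ - T - (h + (1 - α) * τ)) / (τ * σ) = (α * τ - T) / (τ * σ) := by
      congr 1; ring
    have e2 : (h + T - (h + (1 - α) * τ)) / (τ * σ) = (T - (1 - α) * τ) / (τ * σ) := by
      congr 1; ring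
    have h3 : stdPhi ((T - (1 - α) * τ) / (τ * σ)) - stdPhi ((α * τ - T) / (τ * σ))
        = (∫ u in ((α * τ - T) / (τ * σ))..((T - (1 - α) * τ) / (τ * σ)),
            exp (-u ^ 2 / 2)) / Real.sqrt (2 * π) := by
      rw [stdPhi_sub, intervalIntegral.integral_div]
    rw [h1, h2, e1, e2, smul_eq_mul, h3]
    field_simp
  have hIval : I = exp (α * (α - 1) / (2 * σ ^ 2)) *
      (stdPhi ((T - (1 - α) * τ) / (τ * σ)) - stdPhi ((α * τ - T) / (τ * σ))) /
      (stdPhi (T / (τ * σ)) - stdPhi ((τ - T) / (τ * σ))) := by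
    rw [hI, hc]
    simp only [hexp]
    rw [intervalIntegral.integral_const_mul, hchg, hsqrt]
    field_simp
  have hsum : (0:ℝ) ≤ (τ - T) / (τ * σ) + T / (τ * σ) := by
    have : (τ - T) / (τ * σ) + T / (τ * σ) = 1 / σ := by field_simp; ring
    rw [this]; positivity
  have hkey : stdPhi ((T - (1 - α) * τ) / (τ * σ)) - stdPhi ((α * τ - T) / (τ * σ))
      ≤ stdPhi (T / (τ * σ)) - stdPhi ((τ - T) / (τ * σ)) := by
    rw [hb'eq, ha'eq]
    exact key_ineq hAB.le (div_nonneg (by linarith) hσ.le) hsum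
  have hIle : I ≤ exp (α * (α - 1) / (2 * σ ^ 2)) := by
    rw [hIval, div_le_iff₀ hD]
    exact mul_le_mul_of_nonneg_left hkey (Real.exp_pos _).le
  refine ⟨hIval, hIle, ?_⟩
  have hIpos : 0 < I := by
    rw [hIval]
    exact div_pos (mul_pos (Real.exp_pos _) hN) hD
  have hlog : Real.log I ≤ α * (α - 1) / (2 * σ ^ 2) := by
    calc Real.log I ≤ Real.log (exp (α * (α - 1) / (2 * σ ^ 2))) :=
          Real.log_le_log hIpos hIle
      _ = α * (α - 1) / (2 * σ ^ 2) := Real.log_exp _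
  have hα1 : (0:ℝ) < α - 1 := by linarith
  have hfinal : α / (2 * σ ^ 2) = (1 / (α - 1)) * (α * (α - 1) / (2 * σ ^ 2)) := by
    field_simp
  rw [hfinal]
  exact mul_le_mul_of_nonneg_left hlog (by positivity)
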